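/- arXiv:2403.16648 — 2 statements merged into one kernel-verified Lean document; each statement's English description precedes it below -/
import Mathlib

section
/- For all ε ∈ (0,1], 0 ≤ σ ≤ 5, and ξ ∈ ℝ with |ξ| ≤ (1/2)ε^{-2/5}, there exists a constant C independent of ε such that |s_ε(ξ) - s(ξ)| ≤ C ε^{2σ/5} |ξ|^σ, where s_ε(ξ) = (ξ/ε²)(√(1+ε²ξ²) - 1) and s(ξ) = ξ³/2. -/
noncomputable def jb (x : ℝ) : ℝ := Real.sqrt (1 + x ^ 2)

noncomputable def sB (ε ξ : ℝ) : ℝ := ξ / ε ^ 2 * (jb (ε * ξ) - 1)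

lemma key (x : ℝ) : |Real.sqrt (1 + x ^ 2) - 1 - x ^ 2 / 2| ≤ x ^ 4 / 8 := by
  have hnn : (0:ℝ) ≤ 1 + x ^ 2 := by positivity
  have hs : Real.sqrt (1 + x ^ 2) ≤ 1 + x ^ 2 / 2 := by
    rw [show (1 : ℝ) + x ^ 2 / 2 = Real.sqrt ((1 + x ^ 2 / 2) ^ 2) by
      rw [Real.sqrt_sq (by positivity)]]
    exact Real.sqrt_le_sqrt (by nlinarith)
  have hl : 1 + x ^ 2 / 2 - x ^ 4 / 8 ≤ Real.sqrt (1 + x ^ 2) := by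
    rcases le_or_gt (1 + x ^ 2 / 2 - x ^ 4 / 8) 0 with h | h
    · exact h.trans (Real.sqrt_nonneg _)
    · refine (Real.le_sqrt h.le hnn).mpr ?_
      nlinarith [sq_nonneg (x^2), sq_nonneg x, sq_nonneg (x^4)]
  rw [abs_le]
  constructor <;> nlinarith

theorem stmt_1 :
    ∃ C : ℝ, 0 < C ∧
      ∀ ε ∈ Set.Ioc (0 : ℝ) 1, ∀ σ : ℝ, 0 ≤ σ → σ ≤ 5 →
        ∀ ξ : ℝ, |ξ| ≤ (1 / 2) * ε ^ (-(2 : ℝ) / 5) →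
          |sB ε ξ - ξ ^ 3 / 2| ≤ C * ε ^ (2 * σ / 5) * |ξ| ^ σ := by
  refine ⟨1, one_pos, ?_⟩
  rintro ε ⟨hε0, hε1⟩ σ hσ0 hσ5 ξ hξ
  rcases eq_or_ne ξ 0 with rfl | hξ0
  · simp [sB]
    positivity
  -- pointwise bound
  have h1 : |sB ε ξ - ξ ^ 3 / 2| ≤ ε ^ 2 * |ξ| ^ 5 / 8 := by
    have heq : sB ε ξ - ξ ^ 3 / 2
        = ξ / ε ^ 2 * (Real.sqrt (1 + (ε * ξ) ^ 2) - 1 - (ε * ξ) ^ 2 / 2) := by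
      unfold sB jb
      field_simp
    rw [heq, abs_mul, abs_div]
    have hk := key (ε * ξ)
    have : |ξ| / |ε ^ 2| * |Real.sqrt (1 + (ε * ξ) ^ 2) - 1 - (ε * ξ) ^ 2 / 2|
        ≤ |ξ| / |ε ^ 2| * ((ε * ξ) ^ 4 / 8) := by
      apply mul_le_mul_of_nonneg_left hk (by positivity)
    refine this.trans ?_
    rw [abs_of_pos (by positivity : (0:ℝ) < ε ^ 2)]
    rw [div_mul_eq_mul_div, mul_pow, div_le_div_iff₀ (by positivity) (by norm_num)]
    have : |ξ| ^ 5 = |ξ| * ξ ^ 4 := by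
      rw [show (5:ℕ) = 1 + 4 by rfl, pow_add, pow_one, ← abs_pow, abs_of_nonneg (by positivity : (0:ℝ) ≤ ξ ^ 4)]
    nlinarith [sq_nonneg ε, abs_nonneg ξ, pow_pos hε0 4, this]
  refine h1.trans ?_
  -- now t := ε^(2/5) * |ξ| ≤ 1/2
  set t : ℝ := ε ^ ((2:ℝ)/5) * |ξ| with ht
  have habs : (0:ℝ) < |ξ| := abs_pos.mpr hξ0
  have htpos : 0 < t := by positivity
  have ht12 : t ≤ 1 / 2 := by
    have h := mul_le_mul_of_nonneg_left hξ (le_of_lt (Real.rpow_pos_of_pos hε0 ((2:ℝ)/5)))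
    calc t ≤ ε ^ ((2:ℝ)/5) * ((1/2) * ε ^ (-(2:ℝ)/5)) := h
      _ = 1/2 := by
        rw [← mul_assoc, mul_comm (ε ^ ((2:ℝ)/5)) (1/2:ℝ), mul_assoc,
          ← Real.rpow_add hε0]
        norm_num
  have ht1 : t ≤ 1 := ht12.trans (by norm_num)
  have h5 : t ^ (5:ℝ) ≤ t ^ σ := Real.rpow_le_rpow_of_exponent_ge htpos ht1 hσ5
  have te : t ^ (5:ℝ) = ε ^ 2 * |ξ| ^ 5 := by
    rw [show (5:ℝ) = ((5:ℕ):ℝ) by norm_num, Real.rpow_natCast, ht, mul_pow,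
      ← Real.rpow_natCast (ε ^ ((2:ℝ)/5)) 5, ← Real.rpow_mul hε0.le]
    norm_num
  have hl : ε ^ 2 * |ξ| ^ 5 / 8 ≤ t ^ (5:ℝ) := by
    rw [te]
    nlinarith [mul_pos (pow_pos hε0 2) (pow_pos habs 5)]
  have hr : t ^ σ = ε ^ (2 * σ / 5) * |ξ| ^ σ := by
    rw [ht, Real.mul_rpow (by positivity) (abs_nonneg ξ), ← Real.rpow_mul hε0.le]
    ring_nf
  calc ε ^ 2 * |ξ| ^ 5 / 8 ≤ t ^ (5:ℝ) := hl
    _ ≤ t ^ σ := h5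
    _ = 1 * ε ^ (2 * σ / 5) * |ξ| ^ σ := by rw [hr]; ring
end

section
/- If b' ≥ b > 1/2, then there is a constant C (depending only on b, b') such that for all α, β ∈ ℝ, ∫_ℝ ⟨x-α⟩^{-2b'} ⟨x-β⟩^{-2b} dx ≤ C ⟨α-β⟩^{-2b}. -/
open MeasureTheory

lemma jb_pos (x : ℝ) : 0 < jb x := Real.sqrt_pos.mpr (by positivity)

lemma one_le_jb (x : ℝ) : 1 ≤ jb x := by
  rw [jb, show (1 + x ^ 2 : ℝ) = 1 ^ 2 + x ^ 2 by ring]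
  nlinarith [Real.sq_sqrt (by positivity : (0:ℝ) ≤ 1 ^ 2 + x ^ 2),
    Real.sqrt_nonneg (1 ^ 2 + x ^ 2), sq_nonneg x]

lemma jb_mono {u v : ℝ} (h : |u| ≤ |v|) : jb u ≤ jb v := by
  apply Real.sqrt_le_sqrt
  have := sq_abs u; have := sq_abs v
  nlinarith [abs_nonneg u]

lemma jb_half (t : ℝ) : jb t / 2 ≤ jb (t / 2) := by
  have h1 := Real.sq_sqrt (by positivity : (0:ℝ) ≤ 1 + t ^ 2)
  have h2 := Real.sq_sqrt (by positivity : (0:ℝ) ≤ 1 + (t / 2) ^ 2)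
  have h3 := Real.sqrt_nonneg (1 + t ^ 2)
  have h4 := Real.sqrt_nonneg (1 + (t / 2) ^ 2)
  rw [jb, jb]
  nlinarith [sq_nonneg (Real.sqrt (1 + t ^ 2) - 2 * Real.sqrt (1 + (t / 2) ^ 2))]

lemma jb_rpow (x y : ℝ) : jb x ^ y = (1 + x ^ 2) ^ (y / 2) := by
  rw [jb, Real.sqrt_eq_rpow, ← Real.rpow_mul (by positivity), one_div]
  ring_nf

lemma integrable_jb_rpow {b : ℝ} (hb : 1 / 2 < b) :
    Integrable (fun x : ℝ ↦ jb x ^ (-(2 * b))) := by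
  have h : (Module.finrank ℝ ℝ : ℝ) < 2 * b := by
    simp [Module.finrank_self]; linarith
  have := integrable_rpow_neg_one_add_norm_sq (E := ℝ) (μ := volume) h
  refine this.congr (ae_of_all _ fun x => ?_)
  show (1 + ‖x‖ ^ 2) ^ (-(2 * b) / 2) = jb x ^ (-(2 * b))
  rw [jb_rpow, Real.norm_eq_abs, sq_abs]

lemma jb_rpow_le {u v z : ℝ} (h : jb u ≤ jb v) (hz : z ≤ 0) : jb v ^ z ≤ jb u ^ z :=
  Real.rpow_le_rpow_of_nonpos (jb_pos u) h hz

theorem stmt_3 (b b' : ℝ) (hb : 1 / 2 < b) (hbb : b ≤ b') :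
    ∃ C : ℝ, 0 < C ∧
      ∀ α β : ℝ,
        ∫ x : ℝ, jb (x - α) ^ (-(2 * b')) * jb (x - β) ^ (-(2 * b)) ≤
          C * jb (α - β) ^ (-(2 * b)) := by
  have hb' : 1 / 2 < b' := lt_of_lt_of_le hb hbb
  have hbneg : -(2 * b) ≤ 0 := by linarith
  have hb'neg : -(2 * b') ≤ 0 := by linarith
  set I : ℝ := ∫ x : ℝ, jb x ^ (-(2 * b)) with hI
  have hInt : Integrable (fun x : ℝ ↦ jb x ^ (-(2 * b))) := integrable_jb_rpow hb
  have hInonneg : 0 ≤ I :=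
    integral_nonneg fun x => Real.rpow_nonneg (jb_pos x).le _
  set K : ℝ := (2 : ℝ) ^ (2 * b') with hK
  have hKpos : 0 < K := Real.rpow_pos_of_pos (by norm_num) _
  refine ⟨K * (2 * I + 1), by positivity, fun α β => ?_⟩
  -- pointwise bound
  have key : ∀ x : ℝ,
      jb (x - α) ^ (-(2 * b')) * jb (x - β) ^ (-(2 * b)) ≤
        K * jb (α - β) ^ (-(2 * b)) *
          (jb (x - β) ^ (-(2 * b)) + jb (x - α) ^ (-(2 * b))) := by
    intro x
    have hposαβ : 0 < jb (α - β) := jb_pos _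
    have h2 : jb (α - β) / 2 ^ (1:ℝ) = jb (α - β) / 2 := by norm_num
    rcases le_total (|α - β| / 2) (|x - α|) with hcase | hcase
    · -- |x - α| ≥ |α-β|/2
      have h1 : jb (α - β) / 2 ≤ jb (x - α) := by
        refine le_trans (jb_half (α - β)) (le_trans (jb_mono ?_) le_rfl)
        rw [abs_div]
        simpa using hcase
      have h3 : jb (x - α) ^ (-(2 * b')) ≤ (jb (α - β) / 2) ^ (-(2 * b')) :=
        Real.rpow_le_rpow_of_nonpos (by positivity) h1 hb'neg
      have h4 : (jb (α - β) / 2) ^ (-(2 * b')) =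
          K * jb (α - β) ^ (-(2 * b')) := by
        rw [Real.div_rpow hposαβ.le (by norm_num), Real.rpow_neg (by norm_num : (0:ℝ) ≤ 2)]
        field_simp [hK]
        ring
      have h5 : jb (α - β) ^ (-(2 * b')) ≤ jb (α - β) ^ (-(2 * b)) :=
        Real.rpow_le_rpow_of_exponent_le (one_le_jb _) (by linarith)
      have h6 : jb (x - α) ^ (-(2 * b')) ≤ K * jb (α - β) ^ (-(2 * b)) := by
        calc jb (x - α) ^ (-(2 * b')) ≤ K * jb (α - β) ^ (-(2 * b')) := h4 ▸ h3
          _ ≤ K * jb (α - β) ^ (-(2 * b)) := by nlinarith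
      have hnn : 0 ≤ jb (x - β) ^ (-(2 * b)) := Real.rpow_nonneg (jb_pos _).le _
      have hnn2 : 0 ≤ jb (x - α) ^ (-(2 * b)) := Real.rpow_nonneg (jb_pos _).le _
      nlinarith [mul_le_mul_of_nonneg_right h6 hnn, Real.rpow_nonneg hposαβ.le (-(2*b)),
        mul_nonneg (mul_nonneg hKpos.le (Real.rpow_nonneg hposαβ.le (-(2*b)))) hnn2]
    · -- |x - β| ≥ |α-β|/2
      have habs : |α - β| / 2 ≤ |x - β| := by
        have := abs_sub_abs_le_abs_sub (α - β) (α - x)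
        have h := abs_sub (α - β) (α - x)
        have : |α - β| ≤ |x - α| + |x - β| := by
          calc |α - β| = |(α - x) + (x - β)| := by ring_nf
            _ ≤ |α - x| + |x - β| := abs_add_le _ _
            _ = |x - α| + |x - β| := by rw [abs_sub_comm α x]
        linarith
      have h1 : jb (α - β) / 2 ≤ jb (x - β) := by
        refine le_trans (jb_half (α - β)) (jb_mono ?_)
        rw [abs_div]; simpa using habs
      have h3 : jb (x - β) ^ (-(2 * b)) ≤ (jb (α - β) / 2) ^ (-(2 * b)) :=
        Real.rpow_le_rpow_of_nonpos (by positivity) h1 hbneg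
      have h4 : (jb (α - β) / 2) ^ (-(2 * b)) =
          (2:ℝ) ^ (2 * b) * jb (α - β) ^ (-(2 * b)) := by
        rw [Real.div_rpow hposαβ.le (by norm_num), Real.rpow_neg (by norm_num : (0:ℝ) ≤ 2)]
        field_simp
      have hK2 : (2:ℝ) ^ (2 * b) ≤ K :=
        Real.rpow_le_rpow_of_exponent_le (by norm_num) (by linarith)
      have h6 : jb (x - β) ^ (-(2 * b)) ≤ K * jb (α - β) ^ (-(2 * b)) := by
        have hnn : 0 ≤ jb (α - β) ^ (-(2 * b)) := Real.rpow_nonneg hposαβ.le _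
        calc jb (x - β) ^ (-(2 * b)) ≤ (2:ℝ) ^ (2 * b) * jb (α - β) ^ (-(2 * b)) := h4 ▸ h3
          _ ≤ K * jb (α - β) ^ (-(2 * b)) := by nlinarith
      have h5 : jb (x - α) ^ (-(2 * b')) ≤ jb (x - α) ^ (-(2 * b)) :=
        Real.rpow_le_rpow_of_exponent_le (one_le_jb _) (by linarith)
      have hnn : 0 ≤ jb (x - β) ^ (-(2 * b)) := Real.rpow_nonneg (jb_pos _).le _
      have hnn2 : 0 ≤ jb (x - α) ^ (-(2 * b)) := Real.rpow_nonneg (jb_pos _).le _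
      have hnn3 : 0 ≤ jb (x - α) ^ (-(2 * b')) := Real.rpow_nonneg (jb_pos _).le _
      have := mul_le_mul h5 h6 hnn hnn2
      nlinarith [mul_nonneg (mul_nonneg hKpos.le (Real.rpow_nonneg hposαβ.le (-(2*b)))) hnn]
  -- integrability of the dominating function
  have hIntβ : Integrable (fun x : ℝ ↦ jb (x - β) ^ (-(2 * b))) := hInt.comp_sub_right β
  have hIntα : Integrable (fun x : ℝ ↦ jb (x - α) ^ (-(2 * b))) := hInt.comp_sub_right α
  have hg : Integrable (fun x : ℝ ↦ K * jb (α - β) ^ (-(2 * b)) *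
      (jb (x - β) ^ (-(2 * b)) + jb (x - α) ^ (-(2 * b)))) :=
    (hIntβ.add hIntα).const_mul _
  have hle : (∫ x : ℝ, jb (x - α) ^ (-(2 * b')) * jb (x - β) ^ (-(2 * b))) ≤
      ∫ x : ℝ, K * jb (α - β) ^ (-(2 * b)) *
        (jb (x - β) ^ (-(2 * b)) + jb (x - α) ^ (-(2 * b))) := by
    refine integral_mono_of_nonneg (ae_of_all _ fun x => ?_) hg (ae_of_all _ key)
    exact mul_nonneg (Real.rpow_nonneg (jb_pos _).le _) (Real.rpow_nonneg (jb_pos _).le _)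
  have heval : (∫ x : ℝ, K * jb (α - β) ^ (-(2 * b)) *
      (jb (x - β) ^ (-(2 * b)) + jb (x - α) ^ (-(2 * b)))) =
      K * jb (α - β) ^ (-(2 * b)) * (I + I) := by
    rw [integral_const_mul, integral_add hIntβ hIntα,
      integral_sub_right_eq_self (fun x : ℝ ↦ jb x ^ (-(2 * b))) β,
      integral_sub_right_eq_self (fun x : ℝ ↦ jb x ^ (-(2 * b))) α]
  rw [heval] at hle
  refine le_trans hle ?_
  have hnn : 0 ≤ jb (α - β) ^ (-(2 * b)) := Real.rpow_nonneg (jb_pos _).le _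
  nlinarith
end
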